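/- A uniformly locally bounded space X is complete if and only if every closed bounded subset of X is complete. -/

import Mathlib

open Filter Set

/-- A bornology on `X` (paper's convention): contains singletons, closed under
subsets, and under unions of two intersecting members. -/
structure IsBornology (X : Type*) (𝔅 : Set (Set X)) : Prop where
  singleton_mem : ∀ x : X, {x} ∈ 𝔅
  mem_of_subset : ∀ A ∈ 𝔅, ∀ B : Set X, B ⊆ A → B ∈ 𝔅
  union_mem : ∀ A ∈ 𝔅, ∀ B ∈ 𝔅, (A ∩ B).Nonempty → A ∪ B ∈ 𝔅

/-- The image `E[A] = {y | ∃ x ∈ A, (x, y) ∈ E}` of a set under an entourage. -/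
def entImage {X : Type*} (E : Set (X × X)) (A : Set X) : Set X :=
  {y | ∃ x ∈ A, (x, y) ∈ E}

/-- A uniformly locally bounded space: a uniform space with a bornology admitting
a bounded uniform entourage `E` (i.e. `E[B]` is bounded for every bounded `B`). -/
structure IsULB (X : Type*) [UniformSpace X] (𝔅 : Set (Set X)) : Prop where
  born : IsBornology X 𝔅
  bounded_entourage : ∃ E ∈ uniformity X, ∀ A ∈ 𝔅, entImage E A ∈ 𝔅

/-- A uniformly locally bounded space is complete if and only if every closed
bounded subset is complete. -/
theorem complete_iff_closed_bounded_complete {X : Type*} [UniformSpace X]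
    {𝔅 : Set (Set X)} (h : IsULB X 𝔅) :
    CompleteSpace X ↔ ∀ A ∈ 𝔅, IsClosed A → IsComplete A := by
  constructor
  · intro _ A _ hA
    exact hA.isComplete
  · intro hcomp
    obtain ⟨E, hE, hEb⟩ := h.bounded_entourage
    refine ⟨fun {f} hf => ?_⟩
    -- symmetrize
    set D := SetRel.symmetrize E with hD
    have hDE : D ⊆ E := SetRel.symmetrize_subset_self
    have hDU : D ∈ uniformity X := symmetrize_mem_uniformity hE
    have hDsymm : SetRel.IsSymm D := SetRel.isSymm_symmetrize
    -- get a D-small set in f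
    have hDf : D ∈ f ×ˢ f := hf.2 hDU
    rw [Filter.mem_prod_iff] at hDf
    obtain ⟨t₁, ht₁, t₂, ht₂, hsub⟩ := hDf
    set S := t₁ ∩ t₂ with hS
    have hSf : S ∈ f := inter_mem ht₁ ht₂
    have hSsmall : ∀ x ∈ S, ∀ y ∈ S, (x, y) ∈ D := fun x hx y hy =>
      hsub ⟨hx.1, hy.2⟩
    have hne : S.Nonempty := hf.1.nonempty_of_mem hSf
    obtain ⟨x₀, hx₀⟩ := hne
    -- S is bounded
    have hSb : S ∈ 𝔅 := by
      refine h.born.mem_of_subset _ (hEb _ (h.born.singleton_mem x₀)) _ ?_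
      intro y hy
      exact ⟨x₀, rfl, hDE (hSsmall x₀ hx₀ y hy)⟩
    -- closure S ⊆ entImage E S
    have hclS : closure S ⊆ entImage E S := by
      intro y hy
      have hb : UniformSpace.ball y D ∈ nhds y := UniformSpace.ball_mem_nhds y hDU
      obtain ⟨x, hxb, hxS⟩ := mem_closure_iff_nhds.mp hy _ hb
      exact ⟨x, hxS, hDE (hDsymm.symm _ _ hxb)⟩
    have hclSb : closure S ∈ 𝔅 :=
      h.born.mem_of_subset _ (hEb _ hSb) _ hclS
    have hcl : IsComplete (closure S) := hcomp _ hclSb isClosed_closure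
    have hle : f ≤ Filter.principal (closure S) :=
      Filter.le_principal_iff.mpr (mem_of_superset hSf subset_closure)
    obtain ⟨y, _, hy⟩ := hcl f hf hle
    exact ⟨y, hy⟩
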